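/- For q a prime power with q > 3, the group PSL(2,q) contains a unique conjugacy class of involutions. -/

import Mathlib

open Matrix

namespace Stmt8Aux

variable {F : Type*} [Field F] [Fintype F]

lemma sumSq (c : F) : ∃ x y : F, x ^ 2 + y ^ 2 = c := by
  by_cases h2 : ringChar F = 2
  · obtain ⟨x, hx⟩ := FiniteField.isSquare_of_char_two h2 c
    exact ⟨x, 0, by rw [hx]; ring⟩
  · obtain ⟨a, b, hab⟩ := FiniteField.exists_root_sum_quadratic
      (f := (Polynomial.X : Polynomial F) ^ 2)
      (g := (Polynomial.X : Polynomial F) ^ 2 - Polynomial.C c)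
      (Polynomial.degree_X_pow 2) (Polynomial.degree_X_pow_sub_C (by norm_num) _)
      (FiniteField.odd_card_of_char_ne_two h2)
    simp only [Polynomial.eval_add, Polynomial.eval_pow, Polynomial.eval_X,
      Polynomial.eval_sub, Polynomial.eval_C] at hab
    exact ⟨a, b, by linear_combination hab⟩

/-- The reference involution `!![0,-1;1,0]`. -/
def Cmat : Matrix.SpecialLinearGroup (Fin 2) F :=
  ⟨!![0, -1; 1, 0], by simp [Matrix.det_fin_two_of]⟩

lemma conj_of_c_ne (A : Matrix.SpecialLinearGroup (Fin 2) F) (a b c : F)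
    (hA : A.1 = !![a, b; c, -a]) (hc : c ≠ 0) :
    IsConj A (Cmat (F := F)) := by
  have hbc : b * c = -1 - a ^ 2 := by
    have h := A.2
    rw [hA, Matrix.det_fin_two_of] at h
    linear_combination -h
  obtain ⟨x, y, hxy⟩ := sumSq c
  obtain ⟨s, t, hst⟩ : ∃ s t : F, s = (x + a * y) / c ∧ t = y := ⟨_, _, rfl, rfl⟩
  obtain ⟨hs, ht'⟩ := hst
  have hdg : (!![s, a * s + b * t; t, c * s - a * t] : Matrix (Fin 2) (Fin 2) F).det = 1 := by
    rw [Matrix.det_fin_two_of, hs, ht']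
    field_simp
    linear_combination hxy - y ^ 2 * hbc
  obtain ⟨g, hgval⟩ : ∃ g : Matrix.SpecialLinearGroup (Fin 2) F,
      g.1 = !![s, a * s + b * t; t, c * s - a * t] := ⟨⟨_, hdg⟩, rfl⟩
  have hcomm : A * g = g * Cmat := by
    apply Subtype.ext
    rw [Matrix.SpecialLinearGroup.coe_mul, Matrix.SpecialLinearGroup.coe_mul]
    show A.1 * g.1 = g.1 * (Cmat (F := F)).1
    rw [hA, hgval]
    show _ = _ * !![0, -1; 1, 0]
    rw [← Matrix.ext_iff]
    simp only [Fin.forall_fin_two, Matrix.mul_apply, Fin.sum_univ_two,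
      Matrix.cons_val_zero, Matrix.cons_val_one, Matrix.head_cons, Matrix.head_fin_const,
      Matrix.cons_val', Matrix.empty_val', Matrix.cons_val_fin_one, Matrix.of_apply]
    refine ⟨⟨by ring, by linear_combination s * hbc⟩, by ring, by linear_combination t * hbc⟩
  have hkey : g⁻¹ * A * g = Cmat := by
    rw [mul_assoc, hcomm, ← mul_assoc, inv_mul_cancel, one_mul]
  rw [isConj_iff]
  exact ⟨_, by rw [inv_inv]; exact hkey⟩

lemma conj_C (A : Matrix.SpecialLinearGroup (Fin 2) F) (a b c : F)
    (hA : A.1 = !![a, b; c, -a])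
    (hnc : A ∉ Subgroup.center (Matrix.SpecialLinearGroup (Fin 2) F)) :
    IsConj A (Cmat (F := F)) := by
  by_cases hc : c ≠ 0
  · exact conj_of_c_ne A a b c hA hc
  push_neg at hc
  subst hc
  have hdet := A.2
  rw [hA, Matrix.det_fin_two_of] at hdet
  by_cases hb : b ≠ 0
  · -- conjugate by Cmat to move b into the lower-left corner
    have hD : (Cmat (F := F))⁻¹ = (⟨!![0, 1; -1, 0], by simp [Matrix.det_fin_two_of]⟩ :
        Matrix.SpecialLinearGroup (Fin 2) F) := by
      apply inv_eq_of_mul_eq_one_right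
      apply Subtype.ext
      show (Cmat (F := F)).1 * _ = (1 : Matrix (Fin 2) (Fin 2) F)
      show !![(0:F), -1; 1, 0] * !![0, 1; -1, 0] = 1
      rw [← Matrix.ext_iff]
      simp only [Fin.forall_fin_two, Matrix.mul_apply, Fin.sum_univ_two,
        Matrix.cons_val_zero, Matrix.cons_val_one, Matrix.head_cons, Matrix.head_fin_const,
        Matrix.cons_val', Matrix.empty_val', Matrix.cons_val_fin_one, Matrix.of_apply,
        Matrix.one_apply]
      norm_num
    have h1 : IsConj A (Cmat * A * Cmat⁻¹) := isConj_iff.mpr ⟨Cmat, rfl⟩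
    have hu : (Cmat * A * Cmat⁻¹).1 = !![-a, 0; -b, -(-a)] := by
      rw [Matrix.SpecialLinearGroup.coe_mul, Matrix.SpecialLinearGroup.coe_mul, hA, hD]
      show !![(0:F), -1; 1, 0] * _ * !![0, 1; -1, 0] = _
      rw [← Matrix.ext_iff]
      simp only [Fin.forall_fin_two, Matrix.mul_apply, Fin.sum_univ_two,
        Matrix.cons_val_zero, Matrix.cons_val_one, Matrix.head_cons, Matrix.head_fin_const,
        Matrix.cons_val', Matrix.empty_val', Matrix.cons_val_fin_one, Matrix.of_apply]
      refine ⟨⟨by ring, by ring⟩, by ring, by ring⟩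
    exact h1.trans (conj_of_c_ne _ (-a) 0 (-b) (by rw [hu]) (neg_ne_zero.mpr hb))
  push_neg at hb
  subst hb
  -- now A = diag (a, -a) with -a^2 = 1
  have ha : a ≠ 0 := by
    intro h
    rw [h] at hdet
    simp at hdet
  by_cases h2 : (2 : F) = 0
  · -- characteristic 2 : A is central, contradiction
    exfalso
    apply hnc
    rw [Matrix.SpecialLinearGroup.mem_center_iff]
    refine ⟨a, ?_, ?_⟩
    · rw [Fintype.card_fin]
      linear_combination -hdet - h2
    · rw [hA, Matrix.scalar_apply, ← Matrix.ext_iff]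
      simp only [Fin.forall_fin_two, Matrix.diagonal_apply, Matrix.cons_val_zero,
        Matrix.cons_val_one, Matrix.head_cons, Matrix.head_fin_const, Matrix.cons_val',
        Matrix.empty_val', Matrix.cons_val_fin_one, Matrix.of_apply]
      norm_num
      linear_combination a * h2
  · -- odd characteristic : conjugate by a unipotent to create a nonzero corner
    have hh : (!![1, 0; 1, 1] : Matrix (Fin 2) (Fin 2) F).det = 1 := by
      simp [Matrix.det_fin_two_of]
    obtain ⟨h, hhval⟩ : ∃ h : Matrix.SpecialLinearGroup (Fin 2) F,
        h.1 = !![1, 0; 1, 1] := ⟨⟨_, hh⟩, rfl⟩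
    have hDv : h⁻¹ = (⟨!![1, 0; -1, 1], by simp [Matrix.det_fin_two_of]⟩ :
        Matrix.SpecialLinearGroup (Fin 2) F) := by
      apply inv_eq_of_mul_eq_one_right
      apply Subtype.ext
      show h.1 * _ = (1 : Matrix (Fin 2) (Fin 2) F)
      rw [hhval]
      show !![(1:F), 0; 1, 1] * !![1, 0; -1, 1] = (1 : Matrix (Fin 2) (Fin 2) F)
      rw [← Matrix.ext_iff]
      simp only [Fin.forall_fin_two, Matrix.mul_apply, Fin.sum_univ_two,
        Matrix.cons_val_zero, Matrix.cons_val_one, Matrix.head_cons, Matrix.head_fin_const,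
        Matrix.cons_val', Matrix.empty_val', Matrix.cons_val_fin_one, Matrix.of_apply,
        Matrix.one_apply]
      norm_num
    have h1 : IsConj A (h * A * h⁻¹) := isConj_iff.mpr ⟨h, rfl⟩
    have hu : (h * A * h⁻¹).1 = !![a, 0; 2 * a, -a] := by
      rw [Matrix.SpecialLinearGroup.coe_mul, Matrix.SpecialLinearGroup.coe_mul, hA, hhval, hDv]
      show !![(1:F), 0; 1, 1] * _ * !![1, 0; -1, 1] = _
      rw [← Matrix.ext_iff]
      simp only [Fin.forall_fin_two, Matrix.mul_apply, Fin.sum_univ_two,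
        Matrix.cons_val_zero, Matrix.cons_val_one, Matrix.head_cons, Matrix.head_fin_const,
        Matrix.cons_val', Matrix.empty_val', Matrix.cons_val_fin_one, Matrix.of_apply]
      refine ⟨⟨by ring, by ring⟩, by ring, by ring⟩
    exact h1.trans (conj_of_c_ne _ a 0 (2 * a) (by rw [hu]) (mul_ne_zero h2 ha))

lemma trace_eq_zero (A : Matrix.SpecialLinearGroup (Fin 2) F)
    (hnc : A ∉ Subgroup.center (Matrix.SpecialLinearGroup (Fin 2) F))
    (hsq : A ^ 2 ∈ Subgroup.center (Matrix.SpecialLinearGroup (Fin 2) F)) :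
    A.1 1 1 = -A.1 0 0 := by
  obtain ⟨r, hr, hrA⟩ := Matrix.SpecialLinearGroup.mem_center_iff.mp hsq
  have hA2 : (A ^ 2).1 = A.1 * A.1 := by rw [pow_two]; rfl
  rw [hA2] at hrA
  have h01 : (0 : F) = (A.1 * A.1) 0 1 := by
    rw [← hrA, Matrix.scalar_apply]; simp
  have h10 : (0 : F) = (A.1 * A.1) 1 0 := by
    rw [← hrA, Matrix.scalar_apply]; simp
  have h00 : r = (A.1 * A.1) 0 0 := by
    rw [← hrA, Matrix.scalar_apply]; simp
  have h11 : r = (A.1 * A.1) 1 1 := by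
    rw [← hrA, Matrix.scalar_apply]; simp
  simp only [Matrix.mul_apply, Fin.sum_univ_two] at h01 h10 h00 h11
  by_contra hd
  have had : A.1 0 0 + A.1 1 1 ≠ 0 := fun h => hd (by linear_combination h)
  have hb : A.1 0 1 = 0 := by
    rcases mul_eq_zero.mp (show A.1 0 1 * (A.1 0 0 + A.1 1 1) = 0 by linear_combination -h01) with
      h | h
    · exact h
    · exact absurd h had
  have hcz : A.1 1 0 = 0 := by
    rcases mul_eq_zero.mp (show A.1 1 0 * (A.1 0 0 + A.1 1 1) = 0 by linear_combination -h10) with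
      h | h
    · exact h
    · exact absurd h had
  have haa : A.1 0 0 = A.1 1 1 := by
    have hsqeq : A.1 0 0 ^ 2 = A.1 1 1 ^ 2 := by
      linear_combination h11 - h00
    have := mul_eq_zero.mp (show (A.1 0 0 - A.1 1 1) * (A.1 0 0 + A.1 1 1) = 0 by
      linear_combination hsqeq)
    rcases this with h | h
    · linear_combination h
    · exact absurd h had
  apply hnc
  rw [Matrix.SpecialLinearGroup.mem_center_iff]
  have hdet := A.2
  rw [Matrix.det_fin_two] at hdet
  rw [hb] at hdet
  rw [← haa] at hdet
  refine ⟨A.1 0 0, ?_, ?_⟩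
  · rw [Fintype.card_fin]
    linear_combination hdet
  · rw [Matrix.scalar_apply, ← Matrix.ext_iff]
    simp only [Fin.forall_fin_two, Matrix.diagonal_apply]
    norm_num [hb, hcz, haa]

end Stmt8Aux

theorem stmt8 (p e q : ℕ) (hp : p.Prime) (he : 0 < e) (hq : q = p ^ e) (hq3 : 3 < q)
    (F : Type*) [Field F] [Fintype F] (hF : Fintype.card F = q)
    (x y : Matrix.SpecialLinearGroup (Fin 2) F ⧸
      Subgroup.center (Matrix.SpecialLinearGroup (Fin 2) F))
    (hx : orderOf x = 2) (hy : orderOf y = 2) : IsConj x y := by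
  have key : ∀ z : Matrix.SpecialLinearGroup (Fin 2) F ⧸
      Subgroup.center (Matrix.SpecialLinearGroup (Fin 2) F), orderOf z = 2 →
      IsConj z ((QuotientGroup.mk' _) (Stmt8Aux.Cmat (F := F))) := by
    intro z hz
    obtain ⟨A, hA⟩ := QuotientGroup.mk'_surjective
      (Subgroup.center (Matrix.SpecialLinearGroup (Fin 2) F)) z
    have hnc : A ∉ Subgroup.center (Matrix.SpecialLinearGroup (Fin 2) F) := by
      intro h
      have h1 : z = 1 := by
        rw [← hA]
        exact (QuotientGroup.eq_one_iff A).mpr h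
      rw [h1, orderOf_one] at hz
      norm_num at hz
    have hsq : A ^ 2 ∈ Subgroup.center (Matrix.SpecialLinearGroup (Fin 2) F) := by
      have h1 : z ^ 2 = 1 := by
        have h2 := pow_orderOf_eq_one z
        rwa [hz] at h2
      rw [← hA, ← map_pow] at h1
      exact (QuotientGroup.eq_one_iff _).mp h1
    have htr := Stmt8Aux.trace_eq_zero A hnc hsq
    have hconj := Stmt8Aux.conj_C A (A.1 0 0) (A.1 0 1) (A.1 1 0)
      (by rw [← htr]; exact Matrix.eta_fin_two A.1) hnc
    have := (QuotientGroup.mk' (Subgroup.center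
      (Matrix.SpecialLinearGroup (Fin 2) F))).map_isConj hconj
    rwa [hA] at this
  exact (key x hx).trans (key y hy).symm
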